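/- arXiv:2207.07545 — 2 statements merged into one kernel-verified Lean document; each statement's English description precedes it below -/
import Mathlib

section
/- Let X be a real Banach space and let P ⊆ X be a nonempty closed convex cone satisfying P ∩ (−P) = {0}; order X by declaring u ≼ v if and only if v − u ∈ P. Let T : X → X be a map that is (i) continuous, (ii) compact in the sense that T maps bounded subsets of X to relatively compact subsets, (iii) order-preserving (u ≼ v implies T(u) ≼ T(v)), and (iv) positively 1-homogeneous (T(s·u) = s·T(u) for every s ≥ 0 and u ∈ X). If there exist a nonzero element u ∈ P and a constant M > 0 such that u ≼ M·T(u), then there exist a real number λ > 0 and a nonzero x ∈ P such that T(x) = λ·x. -/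
open Filter Topology Metric Bornology

section KRaux
set_option linter.unusedSectionVars false
set_option linter.unnecessarySeqFocus false
set_option maxHeartbeats 1000000

variable {X : Type*} [NormedAddCommGroup X] [NormedSpace ℝ X]
variable {P : Set X} {T : X → X}

lemma kr_chain (hPadd : ∀ u ∈ P, ∀ v ∈ P, u + v ∈ P) (h0P : (0:X) ∈ P)
    (z : ℕ → X) (hinc : ∀ n, z (n+1) - z n ∈ P) :
    ∀ {n m : ℕ}, n ≤ m → z m - z n ∈ P := by
  intro n m hnm
  induction m, hnm using Nat.le_induction with
  | base => simpa using h0P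
  | succ m hnm ih =>
      have := hPadd _ (hinc m) _ ih
      simpa [sub_add_sub_cancel] using this

/-- increasing + compact ⇒ convergent, with limit an upper bound -/

lemma kr_conv (hPclosed : IsClosed P) (hPadd : ∀ u ∈ P, ∀ v ∈ P, u + v ∈ P)
    (hPpointed : ∀ u : X, u ∈ P → -u ∈ P → u = 0) (h0P : (0:X) ∈ P)
    (z : ℕ → X) (hinc : ∀ n, z (n+1) - z n ∈ P)
    (K : Set X) (hK : IsCompact K) (hzK : ∀ n, z n ∈ K) :
    ∃ L, Tendsto z atTop (𝓝 L) ∧ ∀ n, L - z n ∈ P := by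
  obtain ⟨L, -, φ, hφ, hconv⟩ := hK.tendsto_subseq hzK
  have keylim : ∀ (w : X) (ψ : ℕ → ℕ), Tendsto ψ atTop atTop →
      Tendsto (fun k => z (ψ k)) atTop (𝓝 w) → ∀ n, w - z n ∈ P := by
    intro w ψ hψ hconv n
    have htend : Tendsto (fun k => z (ψ k) - z n) atTop (𝓝 (w - z n)) :=
      hconv.sub tendsto_const_nhds
    refine hPclosed.mem_of_tendsto htend ?_
    filter_upwards [hψ.eventually_ge_atTop n] with k hk
    exact kr_chain hPadd h0P z hinc hk
  have hφtend : Tendsto φ atTop atTop := hφ.tendsto_atTop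
  have hle : ∀ n, L - z n ∈ P := keylim L φ hφtend hconv
  refine ⟨L, ?_, hle⟩
  apply Filter.tendsto_of_subseq_tendsto
  intro ns hns
  have hnsK : ∀ k, z (ns k) ∈ K := fun k => hzK _
  obtain ⟨L', -, ms, hms, hconv'⟩ := hK.tendsto_subseq hnsK
  have hmstend : Tendsto (fun k => ns (ms k)) atTop atTop :=
    hns.comp hms.tendsto_atTop
  have hle' : ∀ n, L' - z n ∈ P := keylim L' _ hmstend hconv'
  have h1 : L - L' ∈ P := by
    have : Tendsto (fun k => L - z (ns (ms k))) atTop (𝓝 (L - L')) :=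
      tendsto_const_nhds.sub hconv'
    exact hPclosed.mem_of_tendsto this (Eventually.of_forall fun k => hle _)
  have h2 : L' - L ∈ P := by
    have : Tendsto (fun k => L' - z (φ k)) atTop (𝓝 (L' - L)) :=
      tendsto_const_nhds.sub hconv
    exact hPclosed.mem_of_tendsto this (Eventually.of_forall fun k => hle' _)
  have : L' = L := by
    have := hPpointed _ h2 (by simpa using h1)
    have := sub_eq_zero.mp this
    exact this
  exact ⟨ms, by simpa [this, Function.comp_def] using hconv'⟩

lemma kr_opnorm (hT0 : T 0 = 0)
    (hThom : ∀ s : ℝ, 0 ≤ s → ∀ u : X, T (s • u) = s • T u)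
    {C : ℝ} (hC : ∀ y ∈ closure (T '' closedBall (0:X) 1), ‖y‖ ≤ C) :
    ∀ x : X, ‖T x‖ ≤ C * ‖x‖ := by
  intro x
  rcases eq_or_ne x 0 with rfl | hx
  · simp [hT0]
  · have hxn : (0:ℝ) < ‖x‖ := norm_pos_iff.mpr hx
    have hmem : ‖x‖⁻¹ • x ∈ closedBall (0:X) 1 := by
      simp [mem_closedBall_zero_iff, norm_smul, abs_of_nonneg (inv_nonneg.mpr hxn.le),
        inv_mul_cancel₀ hxn.ne']
    have h1 : T x = ‖x‖ • T (‖x‖⁻¹ • x) := by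
      have := hThom ‖x‖ hxn.le (‖x‖⁻¹ • x)
      rwa [smul_inv_smul₀ hxn.ne'] at this
    have h2 : ‖T (‖x‖⁻¹ • x)‖ ≤ C :=
      hC _ (subset_closure (Set.mem_image_of_mem T hmem))
    calc ‖T x‖ = ‖x‖ * ‖T (‖x‖⁻¹ • x)‖ := by
          rw [h1, norm_smul, Real.norm_eq_abs, abs_of_nonneg hxn.le]
      _ ≤ ‖x‖ * C := by nlinarith
      _ = C * ‖x‖ := mul_comm _ _

/-- iteration lemma -/

lemma kr_iter (hPclosed : IsClosed P) (hPadd : ∀ u ∈ P, ∀ v ∈ P, u + v ∈ P)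
    (hPsmul : ∀ s : ℝ, 0 ≤ s → ∀ u ∈ P, s • u ∈ P)
    (hPpointed : ∀ u : X, u ∈ P → -u ∈ P → u = 0) (h0P : (0:X) ∈ P)
    (hTcont : Continuous T)
    (hTcompact : ∀ B : Set X, Bornology.IsBounded B → IsCompact (closure (T '' B)))
    (hTmono : ∀ u v : X, v - u ∈ P → T v - T u ∈ P) (hT0 : T 0 = 0)
    {m : ℝ} (hm : 0 < m) {w : X} (hw : w ∈ P)
    (z : ℕ → X) (hz0P : z 0 ∈ P)
    (hzrec : ∀ n, z (n+1) = m⁻¹ • (T (z n) + w))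
    (hstart : z 1 - z 0 ∈ P)
    {B : ℝ} (hbd : ∀ n, ‖z n‖ ≤ B) :
    ∃ L ∈ P, m • L = T L + w ∧ L - z 0 ∈ P := by
  have hTP : ∀ x ∈ P, T x ∈ P := fun x hx => by
    have := hTmono 0 x (by simpa using hx)
    simpa [hT0] using this
  have hzP : ∀ n, z n ∈ P := by
    intro n
    induction n with
    | zero => exact hz0P
    | succ n ih =>
        rw [hzrec]
        exact hPsmul _ (inv_nonneg.mpr hm.le) _ (hPadd _ (hTP _ ih) _ hw)
  have hinc : ∀ n, z (n+1) - z n ∈ P := by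
    intro n
    induction n with
    | zero => exact hstart
    | succ n ih =>
        have h1 : T (z (n+1)) - T (z n) ∈ P := hTmono _ _ ih
        obtain ⟨a, ha⟩ : ∃ a, T (z (n+1)) = a := ⟨_, rfl⟩
        have : z (n+2) - z (n+1) = m⁻¹ • (a - T (z n)) := by
          rw [hzrec (n+1), ha, hzrec n]; module
        rw [← ha] at this
        rw [this]
        exact hPsmul _ (inv_nonneg.mpr hm.le) _ h1
  -- compact container
  set K : Set X := insert (z 0)
    ((fun y => m⁻¹ • (y + w)) '' closure (T '' closedBall (0:X) B)) with hK
  have hKc : IsCompact K := by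
    apply IsCompact.insert
    exact ((hTcompact _ isBounded_closedBall).image
      (((continuous_id.add continuous_const)).const_smul m⁻¹))
  have hzK : ∀ n, z n ∈ K := by
    intro n
    cases n with
    | zero => exact Set.mem_insert _ _
    | succ n =>
        refine Set.mem_insert_iff.mpr (Or.inr ?_)
        refine ⟨T (z n), subset_closure (Set.mem_image_of_mem T ?_), (hzrec n).symm⟩
        simpa [mem_closedBall_zero_iff] using hbd n
  obtain ⟨L, htend, hge⟩ := kr_conv hPclosed hPadd hPpointed h0P z hinc K hKc hzK
  have h1 : Tendsto (fun n => z (n+1)) atTop (𝓝 L) := htend.comp (tendsto_add_atTop_nat 1)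
  have h2 : Tendsto (fun n => m⁻¹ • (T (z n) + w)) atTop
      (𝓝 (m⁻¹ • (T L + w))) := by
    exact (((hTcont.tendsto L).comp htend).add tendsto_const_nhds).const_smul m⁻¹
  have hLfix : L = m⁻¹ • (T L + w) := by
    apply tendsto_nhds_unique h1
    simpa only [hzrec] using h2
  refine ⟨L, hPclosed.mem_of_tendsto htend (Eventually.of_forall hzP), ?_, hge 0⟩
  rw [hLfix, smul_smul, mul_inv_cancel₀ hm.ne', one_smul]
  rw [← hLfix]

lemma kr_collatz (hPclosed : IsClosed P) (hPadd : ∀ u ∈ P, ∀ v ∈ P, u + v ∈ P)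
    (hPsmul : ∀ s : ℝ, 0 ≤ s → ∀ u ∈ P, s • u ∈ P)
    (hPpointed : ∀ u : X, u ∈ P → -u ∈ P → u = 0)
    (hTmono : ∀ u v : X, v - u ∈ P → T v - T u ∈ P) (hT0 : T 0 = 0)
    (hThom : ∀ s : ℝ, 0 ≤ s → ∀ u : X, T (s • u) = s • T u)
    {p : X} (hp : p ∈ P) (hpne : p ≠ 0)
    {lam : ℝ} (hlam : 0 ≤ lam) (hsub : T p - lam • p ∈ P)
    {m : ℝ} (hm : 0 < m) {z : X} (hz : z ∈ P) (heq : m • z = T z + p) :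
    lam < m := by
  have hTP : ∀ x ∈ P, T x ∈ P := fun x hx => by
    have := hTmono 0 x (by simpa using hx)
    simpa [hT0] using this
  set Q := {t : ℝ | 0 ≤ t ∧ z - t • p ∈ P} with hQ
  have hQne : (0:ℝ) ∈ Q := ⟨le_refl 0, by simpa using hz⟩
  have hQbdd : BddAbove Q := by
    by_contra hb
    have hstep : ∀ k : ℕ, ∃ t ∈ Q, ((k:ℝ)+1) < t := by
      intro k
      rcases not_bddAbove_iff.mp hb ((k:ℝ)+1) with ⟨t, ht, hlt⟩
      exact ⟨t, ht, hlt⟩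
    choose f hfQ hfgt using hstep
    have hfpos : ∀ k, (0:ℝ) < f k := fun k =>
      lt_of_le_of_lt (by positivity) (hfgt k)
    have hmem : ∀ k, (f k)⁻¹ • z - p ∈ P := by
      intro k
      have := hPsmul (f k)⁻¹ (inv_nonneg.mpr (hfpos k).le) _ (hfQ k).2
      have e : (f k)⁻¹ • (z - f k • p) = (f k)⁻¹ • z - p := by
        rw [smul_sub, smul_smul, inv_mul_cancel₀ (hfpos k).ne', one_smul]
      rwa [e] at this
    have htend : Tendsto (fun k => (f k)⁻¹ • z - p) atTop (𝓝 (-p)) := by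
      have h1 : Tendsto (fun k => (f k)⁻¹) atTop (𝓝 0) := by
        apply Tendsto.comp tendsto_inv_atTop_zero
        apply tendsto_atTop_mono (fun k => (hfgt k).le)
        exact tendsto_atTop_add_const_right _ _ tendsto_natCast_atTop_atTop
      have := (h1.smul_const z).sub
        (tendsto_const_nhds : Tendsto (fun _ : ℕ => p) atTop (𝓝 p))
      simpa using this
    have : -p ∈ P := hPclosed.mem_of_tendsto htend (Eventually.of_forall hmem)
    exact hpne (hPpointed p hp this)
  have hQclosed : IsClosed Q := by
    apply IsClosed.inter
    · exact isClosed_le continuous_const continuous_id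
    · exact hPclosed.preimage (by continuity)
  have htQ : sSup Q ∈ Q := hQclosed.csSup_mem ⟨0, hQne⟩ hQbdd
  set t := sSup Q with htdef
  have h1m : m⁻¹ ∈ Q := by
    refine ⟨inv_nonneg.mpr hm.le, ?_⟩
    obtain ⟨a, ha⟩ : ∃ a, T z = a := ⟨_, rfl⟩
    rw [ha] at heq
    have hzeq : z = m⁻¹ • a + m⁻¹ • p := by
      have := congrArg (fun y => m⁻¹ • y) heq
      simp only [smul_smul, inv_mul_cancel₀ hm.ne', one_smul, smul_add] at this
      exact this
    have : z - m⁻¹ • p = m⁻¹ • a := by rw [hzeq]; module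
    rw [this, ← ha]
    exact hPsmul _ (inv_nonneg.mpr hm.le) _ (hTP z hz)
  have ht0 : 0 < t := lt_of_lt_of_le (inv_pos.mpr hm) (le_csSup hQbdd h1m)
  have key : m • z - (lam * t + 1) • p ∈ P := by
    have a1 : T z - T (t • p) ∈ P := hTmono _ _ htQ.2
    have a2 : T (t • p) = t • T p := hThom t ht0.le p
    have a3 : t • T p - (lam * t) • p ∈ P := by
      have := hPsmul t ht0.le _ hsub
      have e : t • (T p - lam • p) = t • T p - (lam * t) • p := by module
      rwa [e] at this
    have e2 : m • z - (lam * t + 1) • p = (T z - T (t • p)) + (t • T p - (lam * t) • p) := by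
      rw [heq, a2]; module
    rw [e2]
    exact hPadd _ a1 _ a3
  have hmemQ : m⁻¹ * (lam * t + 1) ∈ Q := by
    constructor
    · positivity
    · have := hPsmul m⁻¹ (inv_nonneg.mpr hm.le) _ key
      have e : m⁻¹ • (m • z - (lam * t + 1) • p) = z - (m⁻¹ * (lam * t + 1)) • p := by
        rw [smul_sub, smul_smul, smul_smul, inv_mul_cancel₀ hm.ne', one_smul]
      rwa [e] at this
  have hle : m⁻¹ * (lam * t + 1) ≤ t := le_csSup hQbdd hmemQ
  have : lam * t + 1 ≤ m * t := by
    have := mul_le_mul_of_nonneg_left hle hm.le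
    rw [← mul_assoc, mul_inv_cancel₀ hm.ne', one_mul] at this
    linarith [this]
  nlinarith

lemma kr_record (hPclosed : IsClosed P) (hPadd : ∀ u ∈ P, ∀ v ∈ P, u + v ∈ P)
    (hPsmul : ∀ s : ℝ, 0 ≤ s → ∀ u ∈ P, s • u ∈ P)
    (hPpointed : ∀ u : X, u ∈ P → -u ∈ P → u = 0) (h0P : (0:X) ∈ P)
    (hTcont : Continuous T)
    (hTcompact : ∀ B : Set X, Bornology.IsBounded B → IsCompact (closure (T '' B)))
    (hTmono : ∀ u v : X, v - u ∈ P → T v - T u ∈ P) (hT0 : T 0 = 0)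
    (hThom : ∀ s : ℝ, 0 ≤ s → ∀ u : X, T (s • u) = s • T u)
    {μ : ℝ} (hμ : 0 < μ) {w : X} (hw : w ∈ P) (hw1 : ‖w‖ ≤ 1)
    (z : ℕ → X) (hzP : ∀ n, z n ∈ P) (hz0 : z 0 ≠ 0)
    (hinc : ∀ n, z (n+1) - z n ∈ P)
    (hzrec : ∀ n, μ • z (n+1) = T (z n) + w)
    (hunbdd : ∀ b : ℝ, ∃ n, b < ‖z n‖)
    {C : ℝ} (hC1 : 1 ≤ C) (hCbd : ∀ x, ‖T x‖ ≤ C * ‖x‖) :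
    ∃ (q y : X) (c : ℝ), q ∈ P ∧ ‖q‖ = 1 ∧ T q - μ • q ∈ P ∧ 0 ≤ c ∧ c ≤ μ⁻¹ ∧
      y ∈ closure (T '' closedBall (0:X) 1) ∧ q = c • y := by
  classical
  set σ : ℕ → ℝ := fun n => ‖z n‖ with hσdef
  have hzne : ∀ n, z n ≠ 0 := by
    intro n hn
    have h1 : z n - z 0 ∈ P := kr_chain hPadd h0P z hinc (Nat.zero_le n)
    rw [hn, zero_sub] at h1
    exact hz0 (hPpointed _ (hzP 0) h1)
  have hσpos : ∀ n, 0 < σ n := fun n => norm_pos_iff.mpr (hzne n)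
  have hC0 : (0:ℝ) < C := lt_of_lt_of_le one_pos hC1
  set jb : ℝ := max (max (σ 0) (σ 1)) (2/μ) with hjbdef
  have hjb0 : 0 < jb := lt_of_lt_of_le (by positivity) (le_max_right _ _)
  have hex : ∀ j : ℕ, ∃ n, (j:ℝ) + jb < σ n := fun j => hunbdd _
  set N : ℕ → ℕ := fun j => Nat.find (hex j) with hNdef
  have hNspec : ∀ j : ℕ, (j:ℝ) + jb < σ (N j) := fun j => Nat.find_spec (hex j)
  have hNmin : ∀ j, ∀ k < N j, σ k ≤ (j:ℝ) + jb := fun j k hk =>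
    le_of_not_gt (Nat.find_min (hex j) hk)
  have hN2 : ∀ j, 2 ≤ N j := by
    intro j
    by_contra h
    push_neg at h
    have hle : σ (N j) ≤ jb := by
      interval_cases hNj : (N j)
      · exact le_trans (le_max_left _ _) (le_max_left _ _)
      · exact le_trans (le_max_right _ _) (le_max_left _ _)
    have := hNspec j
    have : (j:ℝ) + jb < jb := lt_of_lt_of_le this hle
    have hj0 : (0:ℝ) ≤ (j:ℝ) := Nat.cast_nonneg j
    linarith
  -- basic recursion in normalized form
  have step : ∀ n, z (n+1) = μ⁻¹ • T (z n) + μ⁻¹ • w := by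
    intro n
    have := congrArg (fun y => μ⁻¹ • y) (hzrec n)
    simp only [smul_smul, inv_mul_cancel₀ hμ.ne', one_smul, smul_add] at this
    exact this
  have recnorm : ∀ k, μ * σ (k+1) ≤ C * σ k + 1 := by
    intro k
    have h1 : ‖μ • z (k+1)‖ = μ * σ (k+1) := by
      rw [norm_smul, Real.norm_eq_abs, abs_of_pos hμ]
    calc μ * σ (k+1) = ‖μ • z (k+1)‖ := h1.symm
      _ = ‖T (z k) + w‖ := by rw [hzrec k]
      _ ≤ ‖T (z k)‖ + ‖w‖ := norm_add_le _ _
      _ ≤ C * σ k + 1 := add_le_add (hCbd _) hw1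
  have hlow : ∀ j : ℕ, μ * ((j:ℝ) + jb) / (2*C) ≤ σ (N j - 1) := by
    intro j
    have e : (N j - 1) + 1 = N j := by have := hN2 j; omega
    have h1 := recnorm (N j - 1)
    rw [e] at h1
    have h2 : (2:ℝ) ≤ μ * ((j:ℝ) + jb) := by
      have hjbge : 2/μ ≤ jb := le_max_right _ _
      have : 2/μ ≤ (j:ℝ) + jb := le_add_of_nonneg_of_le (Nat.cast_nonneg j) hjbge
      calc (2:ℝ) = μ * (2/μ) := by field_simp
        _ ≤ μ * ((j:ℝ) + jb) := by nlinarith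
    have h3 := hNspec j
    rw [div_le_iff₀ (by positivity : (0:ℝ) < 2*C)]
    nlinarith [mul_le_mul_of_nonneg_left h3.le hμ.le]
  -- normalized sequence
  set p : ℕ → X := fun n => (σ n)⁻¹ • z n with hpdef
  have hpnorm : ∀ n, ‖p n‖ = 1 := by
    intro n
    simp only [hpdef]
    rw [norm_smul, Real.norm_eq_abs, abs_of_pos (inv_pos.mpr (hσpos n))]
    exact inv_mul_cancel₀ (hσpos n).ne'
  have hpP : ∀ n, p n ∈ P := fun n =>
    hPsmul _ (inv_nonneg.mpr (hσpos n).le) _ (hzP n)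
  have hzp : ∀ n, z n = σ n • p n := fun n => (smul_inv_smul₀ (hσpos n).ne' _).symm
  have eqGen : ∀ n, p (n+1)
      = ((σ n / σ (n+1)) * μ⁻¹) • T (p n) + (μ * σ (n+1))⁻¹ • w := by
    intro n
    have hTz : T (z n) = σ n • T (p n) := by
      conv_lhs => rw [hzp n]
      exact hThom _ (norm_nonneg _) _
    have h1 : σ n ≠ 0 := (hσpos n).ne'
    have h2 : σ (n+1) ≠ 0 := (hσpos (n+1)).ne'
    have h3 : μ ≠ 0 := hμ.ne'
    have e0 : p (n+1) = (σ (n+1))⁻¹ • (μ⁻¹ • (σ n • T (p n)) + μ⁻¹ • w) := by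
      simp only [hpdef]
      rw [step n, hTz]
    rw [e0]
    match_scalars <;> field_simp <;> ring
  have horder : ∀ n, p (n+1) - (σ n / σ (n+1)) • p n ∈ P := by
    intro n
    have h1 : σ n ≠ 0 := (hσpos n).ne'
    have h2 : σ (n+1) ≠ 0 := (hσpos (n+1)).ne'
    have e : p (n+1) - (σ n / σ (n+1)) • p n = (σ (n+1))⁻¹ • (z (n+1) - z n) := by
      simp only [hpdef]
      match_scalars <;> field_simp <;> ring
    rw [e]
    exact hPsmul _ (inv_nonneg.mpr (hσpos _).le) _ (hinc n)
  -- tendsto facts for the record indices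
  have hjtop : Tendsto (fun j : ℕ => ((j:ℝ) + jb)) atTop atTop :=
    tendsto_atTop_add_const_right _ jb tendsto_natCast_atTop_atTop
  have hσN1top : Tendsto (fun j => σ (N j - 1)) atTop atTop := by
    apply tendsto_atTop_mono (fun j => hlow j)
    exact (hjtop.const_mul_atTop hμ).atTop_div_const (by positivity)
  have hσNtop : Tendsto (fun j => σ (N j)) atTop atTop :=
    tendsto_atTop_mono (fun j => (hNspec j).le) hjtop
  have hε1 : Tendsto (fun j => (μ * σ (N j - 1))⁻¹) atTop (𝓝 0) :=
    tendsto_inv_atTop_zero.comp (hσN1top.const_mul_atTop hμ)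
  have hε2 : Tendsto (fun j => (μ * σ (N j))⁻¹) atTop (𝓝 0) :=
    tendsto_inv_atTop_zero.comp (hσNtop.const_mul_atTop hμ)
  -- compact sets
  have hKT : IsCompact (closure (T '' closedBall (0:X) 1)) :=
    hTcompact _ isBounded_closedBall
  set KT := closure (T '' closedBall (0:X) 1) with hKTdef
  set Rc : ℝ := 2*C/μ * μ⁻¹ with hRcdef
  set K3 : Set (ℝ × X × ℝ) := (Set.Icc 0 Rc) ×ˢ (KT ×ˢ Set.Icc (0:ℝ) 1) with hK3def
  have hK3c : IsCompact K3 := isCompact_Icc.prod (hKT.prod isCompact_Icc)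
  set trip : ℕ → ℝ × X × ℝ := fun j =>
    ((σ (N j - 2) / σ (N j - 1)) * μ⁻¹, (T (p (N j - 2)), σ (N j - 1) / σ (N j))) with htripdef
  have htau : ∀ j, σ (N j - 2) / σ (N j - 1) ≤ 2*C/μ := by
    intro j
    have hb2 : σ (N j - 2) ≤ (j:ℝ) + jb := hNmin j _ (by have := hN2 j; omega)
    have hb1 := hlow j
    have hC0' : (0:ℝ) < 2*C := by positivity
    rw [div_le_iff₀ hC0'] at hb1
    rw [div_le_div_iff₀ (hσpos _) hμ]
    have h2 : μ * σ (N j - 2) ≤ μ * ((j:ℝ) + jb) := mul_le_mul_of_nonneg_left hb2 hμ.le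
    nlinarith [hσpos (N j - 1), hσpos (N j - 2)]
  have htripmem : ∀ j, trip j ∈ K3 := by
    intro j
    refine ⟨⟨by positivity, ?_⟩, ?_, by positivity, ?_⟩
    · have := htau j
      have hiv : (0:ℝ) ≤ μ⁻¹ := inv_nonneg.mpr hμ.le
      rw [hRcdef]
      exact mul_le_mul_of_nonneg_right this hiv
    · exact subset_closure ⟨p (N j - 2), by
        simp [mem_closedBall_zero_iff, hpnorm], rfl⟩
    · rw [div_le_one (hσpos _)]
      exact le_of_lt (lt_of_le_of_lt (hNmin j _ (by have := hN2 j; omega)) (hNspec j))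
  obtain ⟨⟨c₁, y₁, r⟩, hmemK3, φ, hφ, hconv⟩ := hK3c.tendsto_subseq htripmem
  have hφtop : Tendsto φ atTop atTop := hφ.tendsto_atTop
  have hc1 : Tendsto (fun j => (σ (N (φ j) - 2) / σ (N (φ j) - 1)) * μ⁻¹) atTop (𝓝 c₁) := by
    have := (continuous_fst.tendsto ((c₁, (y₁, r)) : ℝ × X × ℝ)).comp hconv
    simpa [htripdef, Function.comp_def] using this
  have hy1 : Tendsto (fun j => T (p (N (φ j) - 2))) atTop (𝓝 y₁) := by
    have := ((continuous_fst.comp continuous_snd).tendsto ((c₁, (y₁, r)) : ℝ × X × ℝ)).comp hconv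
    simpa [htripdef, Function.comp_def] using this
  have hrt : Tendsto (fun j => σ (N (φ j) - 1) / σ (N (φ j))) atTop (𝓝 r) := by
    have := ((continuous_snd.comp continuous_snd).tendsto ((c₁, (y₁, r)) : ℝ × X × ℝ)).comp hconv
    simpa [htripdef, Function.comp_def] using this
  have eidx1 : ∀ j, (N j - 2) + 1 = N j - 1 := fun j => by have := hN2 j; omega
  have eidx2 : ∀ j, (N j - 1) + 1 = N j := fun j => by have := hN2 j; omega
  have eqA : ∀ j, p (N j - 1)
      = ((σ (N j - 2) / σ (N j - 1)) * μ⁻¹) • T (p (N j - 2)) + (μ * σ (N j - 1))⁻¹ • w := by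
    intro j; have := eqGen (N j - 2); rwa [eidx1 j] at this
  have eqB : ∀ j, p (N j)
      = ((σ (N j - 1) / σ (N j)) * μ⁻¹) • T (p (N j - 1)) + (μ * σ (N j))⁻¹ • w := by
    intro j; have := eqGen (N j - 1); rwa [eidx2 j] at this
  set a : X := c₁ • y₁ with hadef
  have hA : Tendsto (fun j => p (N (φ j) - 1)) atTop (𝓝 a) := by
    have h1 : Tendsto (fun j => ((σ (N (φ j) - 2) / σ (N (φ j) - 1)) * μ⁻¹)
        • T (p (N (φ j) - 2))) atTop (𝓝 (c₁ • y₁)) := hc1.smul hy1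
    have h2 : Tendsto (fun j => (μ * σ (N (φ j) - 1))⁻¹ • w) atTop (𝓝 ((0:ℝ) • w)) :=
      (hε1.comp hφtop).smul_const w
    have h3 := h1.add h2
    rw [zero_smul, add_zero] at h3
    exact Tendsto.congr (fun j => (eqA (φ j)).symm) h3
  have ha1 : ‖a‖ = 1 := by
    have h1 : Tendsto (fun j => ‖p (N (φ j) - 1)‖) atTop (𝓝 ‖a‖) := hA.norm
    have h2 : Tendsto (fun j => ‖p (N (φ j) - 1)‖) atTop (𝓝 1) := by
      simp only [hpnorm]; exact tendsto_const_nhds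
    exact tendsto_nhds_unique h1 h2
  have hTA : Tendsto (fun j => T (p (N (φ j) - 1))) atTop (𝓝 (T a)) :=
    (hTcont.tendsto a).comp hA
  set q : X := (r * μ⁻¹) • T a with hqdef
  have hB : Tendsto (fun j => p (N (φ j))) atTop (𝓝 q) := by
    have h1 : Tendsto (fun j => ((σ (N (φ j) - 1) / σ (N (φ j))) * μ⁻¹)
        • T (p (N (φ j) - 1))) atTop (𝓝 ((r * μ⁻¹) • T a)) := (hrt.mul_const μ⁻¹).smul hTA
    have h2 : Tendsto (fun j => (μ * σ (N (φ j)))⁻¹ • w) atTop (𝓝 ((0:ℝ) • w)) :=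
      (hε2.comp hφtop).smul_const w
    have h3 := h1.add h2
    rw [zero_smul, add_zero] at h3
    exact Tendsto.congr (fun j => (eqB (φ j)).symm) h3
  have hq1 : ‖q‖ = 1 := by
    have h1 : Tendsto (fun j => ‖p (N (φ j))‖) atTop (𝓝 ‖q‖) := hB.norm
    have h2 : Tendsto (fun j => ‖p (N (φ j))‖) atTop (𝓝 1) := by
      simp only [hpnorm]; exact tendsto_const_nhds
    exact tendsto_nhds_unique h1 h2
  have hqP : q ∈ P := hPclosed.mem_of_tendsto hB (Eventually.of_forall fun j => hpP _)
  have hr0 : 0 ≤ r := hmemK3.2.2.1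
  have hr1 : r ≤ 1 := hmemK3.2.2.2
  have hord : q - r • a ∈ P := by
    have hterm : ∀ j, p (N (φ j)) - (σ (N (φ j) - 1) / σ (N (φ j))) • p (N (φ j) - 1) ∈ P := by
      intro j; have := horder (N (φ j) - 1); rwa [eidx2] at this
    have htend : Tendsto (fun j => p (N (φ j))
        - (σ (N (φ j) - 1) / σ (N (φ j))) • p (N (φ j) - 1)) atTop (𝓝 (q - r • a)) :=
      hB.sub (hrt.smul hA)
    exact hPclosed.mem_of_tendsto htend (Eventually.of_forall hterm)
  have hsub : T q - μ • q ∈ P := by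
    have h1 : T (r • a) = r • T a := hThom r hr0 a
    have h2 : μ • q = r • T a := by
      rw [hqdef, smul_smul]
      congr 1
      field_simp
    have h3 : T q - T (r • a) ∈ P := hTmono _ _ hord
    have e : T q - μ • q = T q - T (r • a) := by rw [h2, h1]
    rw [e]; exact h3
  refine ⟨q, T a, r * μ⁻¹, hqP, hq1, hsub, by positivity, ?_, ?_, rfl⟩
  · have hiv : (0:ℝ) ≤ μ⁻¹ := inv_nonneg.mpr hμ.le
    calc r * μ⁻¹ ≤ 1 * μ⁻¹ := mul_le_mul_of_nonneg_right hr1 hiv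
      _ = μ⁻¹ := one_mul _
  · exact subset_closure ⟨a, by simp [mem_closedBall_zero_iff, ha1], rfl⟩

end KRaux

set_option maxHeartbeats 1000000 in
/-- Nonlinear Krein–Rutman theorem: if `T` is a continuous, compact, order-preserving,
positively 1-homogeneous map on a real Banach space ordered by a closed convex pointed
cone `P`, and `u ≼ M • T u` for some nonzero `u ∈ P` and `M > 0`, then `T` has a
positive eigenvector in `P` with positive eigenvalue. -/
theorem stmt0 (X : Type*) [NormedAddCommGroup X] [NormedSpace ℝ X] [CompleteSpace X]
    (P : Set X) (hPne : P.Nonempty) (hPclosed : IsClosed P)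
    (hPadd : ∀ u ∈ P, ∀ v ∈ P, u + v ∈ P)
    (hPsmul : ∀ s : ℝ, 0 ≤ s → ∀ u ∈ P, s • u ∈ P)
    (hPpointed : ∀ u : X, u ∈ P → -u ∈ P → u = 0)
    (T : X → X)
    (hTcont : Continuous T)
    (hTcompact : ∀ B : Set X, Bornology.IsBounded B → IsCompact (closure (T '' B)))
    (hTmono : ∀ u v : X, v - u ∈ P → T v - T u ∈ P)
    (hThom : ∀ s : ℝ, 0 ≤ s → ∀ u : X, T (s • u) = s • T u)
    (u : X) (hu : u ∈ P) (hu0 : u ≠ 0)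
    (M : ℝ) (hM : 0 < M) (huM : M • T u - u ∈ P) :
    ∃ (lam : ℝ) (x : X), 0 < lam ∧ x ∈ P ∧ x ≠ 0 ∧ T x = lam • x := by
  classical
  have hT0 : T 0 = 0 := by have := hThom 0 le_rfl 0; simpa using this
  have h0P : (0:X) ∈ P := by have := hPsmul 0 le_rfl u hu; simpa using this
  -- the basic compact set and the norm bound
  have hKT : IsCompact (closure (T '' closedBall (0:X) 1)) :=
    hTcompact _ isBounded_closedBall
  set KT := closure (T '' closedBall (0:X) 1) with hKTdef
  obtain ⟨C₀, hC₀⟩ := isBounded_iff_forall_norm_le.mp hKT.isBounded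
  set C : ℝ := max C₀ 1 with hCdef
  have hC1 : (1:ℝ) ≤ C := le_max_right _ _
  have hC0 : (0:ℝ) < C := lt_of_lt_of_le one_pos hC1
  have hCbd : ∀ x, ‖T x‖ ≤ C * ‖x‖ :=
    kr_opnorm hT0 hThom (fun y hy => le_trans (hC₀ y hy) (le_max_left _ _))
  -- normalized u
  have hun : (0:ℝ) < ‖u‖ := norm_pos_iff.mpr hu0
  set uh : X := ‖u‖⁻¹ • u with huhdef
  have huh1 : ‖uh‖ = 1 := by
    rw [huhdef, norm_smul, Real.norm_eq_abs, abs_of_pos (inv_pos.mpr hun)]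
    exact inv_mul_cancel₀ hun.ne'
  have huhP : uh ∈ P := hPsmul _ (inv_nonneg.mpr hun.le) _ hu
  have hMinv : (0:ℝ) < M⁻¹ := inv_pos.mpr hM
  have huhsub : T uh - M⁻¹ • uh ∈ P := by
    have h1 : T uh = ‖u‖⁻¹ • T u := hThom _ (inv_nonneg.mpr hun.le) u
    have h2 : T uh - M⁻¹ • uh = (‖u‖⁻¹ * M⁻¹) • (M • T u - u) := by
      rw [h1, huhdef]
      match_scalars <;> field_simp <;> ring
    rw [h2]
    exact hPsmul _ (by positivity) _ huM
  -- the compact candidate set and maximal subsolution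
  set Kstar : Set X := (fun cy : ℝ × X => cy.1 • cy.2) '' (Set.Icc (0:ℝ) M ×ˢ KT)
    with hKstardef
  have hKstar : IsCompact Kstar :=
    (isCompact_Icc.prod hKT).image (continuous_fst.smul continuous_snd)
  set Kc : Set X := insert uh Kstar with hKcdef
  have hKc : IsCompact Kc := hKstar.insert uh
  set Λm : ℝ := max M⁻¹ C + 1 with hΛmdef
  set A : Set (ℝ × X) := {lp | lp.1 ∈ Set.Icc (0:ℝ) Λm ∧ lp.2 ∈ Kc ∧ ‖lp.2‖ = 1 ∧
    lp.2 ∈ P ∧ T lp.2 - lp.1 • lp.2 ∈ P} with hAdef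
  have hAclosed : IsClosed A := by
    apply IsClosed.inter
    · exact isClosed_Icc.preimage continuous_fst
    apply IsClosed.inter
    · exact hKc.isClosed.preimage continuous_snd
    apply IsClosed.inter
    · exact isClosed_eq (continuous_norm.comp continuous_snd) continuous_const
    apply IsClosed.inter
    · exact hPclosed.preimage continuous_snd
    · exact hPclosed.preimage ((hTcont.comp continuous_snd).sub
        (continuous_fst.smul continuous_snd))
  have hAcpt : IsCompact A := by
    apply (isCompact_Icc.prod hKc).of_isClosed_subset hAclosed
    intro lp hlp
    exact ⟨hlp.1, hlp.2.1⟩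
  have huhA : (M⁻¹, uh) ∈ A := by
    refine ⟨⟨hMinv.le, ?_⟩, Set.mem_insert _ _, huh1, huhP, huhsub⟩
    have := le_max_left M⁻¹ C
    rw [hΛmdef]; linarith
  obtain ⟨lp0, hlp0A, hmax⟩ := hAcpt.exists_isMaxOn ⟨_, huhA⟩ continuous_fst.continuousOn
  obtain ⟨lam0, p0⟩ := lp0
  have hlam0 : M⁻¹ ≤ lam0 := hmax huhA
  have hlam0pos : 0 < lam0 := lt_of_lt_of_le hMinv hlam0
  have hp0P : p0 ∈ P := hlp0A.2.2.2.1
  have hp01 : ‖p0‖ = 1 := hlp0A.2.2.1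
  have hp0ne : p0 ≠ 0 := by intro h; rw [h] at hp01; simp at hp01
  have hp0sub : T p0 - lam0 • p0 ∈ P := hlp0A.2.2.2.2
  -- the solvability set S
  set S : Set ℝ := {m | 0 < m ∧ ∃ z ∈ P, m • z = T z + p0} with hSdef
  have hC1S : C + 1 ∈ S := by
    have hCp : (0:ℝ) < C + 1 := by linarith
    set F : X → X := fun y => (C+1)⁻¹ • (T y + p0) with hFdef
    set zz : ℕ → X := fun n => F^[n] 0 with hzzdef
    have hrec : ∀ n, zz (n+1) = (C+1)⁻¹ • (T (zz n) + p0) := by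
      intro n
      simp only [hzzdef, Function.iterate_succ_apply']
      rfl
    have hbd : ∀ n, ‖zz n‖ ≤ 1 := by
      intro n
      induction n with
      | zero => simp [hzzdef]
      | succ n ih =>
          rw [hrec n, norm_smul, Real.norm_eq_abs, abs_of_pos (inv_pos.mpr hCp)]
          have h1 : ‖T (zz n) + p0‖ ≤ C * ‖zz n‖ + 1 := by
            calc ‖T (zz n) + p0‖ ≤ ‖T (zz n)‖ + ‖p0‖ := norm_add_le _ _
              _ ≤ C * ‖zz n‖ + 1 := by rw [hp01]; exact add_le_add (hCbd _) le_rfl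
          have h2 : C * ‖zz n‖ + 1 ≤ C + 1 := by nlinarith
          calc (C+1)⁻¹ * ‖T (zz n) + p0‖ ≤ (C+1)⁻¹ * (C + 1) := by
                apply mul_le_mul_of_nonneg_left (le_trans h1 h2) (inv_nonneg.mpr hCp.le)
            _ = 1 := inv_mul_cancel₀ hCp.ne'
    have hstart : zz 1 - zz 0 ∈ P := by
      have e : zz 1 - zz 0 = (C+1)⁻¹ • p0 := by
        rw [hrec 0]
        simp [hzzdef, hT0]
      rw [e]
      exact hPsmul _ (inv_nonneg.mpr hCp.le) _ hp0P
    obtain ⟨L, hLP, hLeq, -⟩ := kr_iter hPclosed hPadd hPsmul hPpointed h0P hTcont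
      hTcompact hTmono hT0 hCp hp0P zz (by simpa [hzzdef] using h0P) hrec hstart hbd
    exact ⟨hCp, L, hLP, hLeq⟩
  have hSlam0 : ∀ m ∈ S, lam0 < m := by
    rintro m ⟨hm, z, hz, heq⟩
    exact kr_collatz hPclosed hPadd hPsmul hPpointed hTmono hT0 hThom hp0P hp0ne
      hlam0pos.le hp0sub hm hz heq
  have hSne : S.Nonempty := ⟨_, hC1S⟩
  have hSbdd : BddBelow S := ⟨lam0, fun m hm => (hSlam0 m hm).le⟩
  set mh : ℝ := sInf S with hmhdef
  have hmhlam0 : lam0 ≤ mh := le_csInf hSne (fun m hm => (hSlam0 m hm).le)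
  have hmhpos : 0 < mh := lt_of_lt_of_le hlam0pos hmhlam0
  have hmhle : mh ≤ C + 1 := csInf_le hSbdd hC1S
  obtain ⟨ms, hanti, hmstend, hmsS⟩ := exists_seq_tendsto_sInf hSne hSbdd
  have hmspos : ∀ k, 0 < ms k := fun k => (hmsS k).1
  have hmsmh : ∀ k, mh ≤ ms k := fun k => csInf_le hSbdd (hmsS k)
  choose zs hzsP hzseq using fun k => (hmsS k).2
  by_cases hbdd : ∃ B, ∀ k, ‖zs k‖ ≤ B
  · -- bounded case: infimum attained; contradiction with maximality of lam0
    exfalso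
    obtain ⟨B, hB⟩ := hbdd
    have hBc : IsCompact (closure (T '' closedBall (0:X) B)) :=
      hTcompact _ isBounded_closedBall
    have hms0 : ∀ k, ms k ≤ ms 0 := fun k => hanti (Nat.zero_le k)
    have hmem : ∀ k, ((T (zs k), ms k) : X × ℝ)
        ∈ (closure (T '' closedBall (0:X) B)) ×ˢ Set.Icc mh (ms 0) := by
      intro k
      refine ⟨subset_closure ⟨zs k, ?_, rfl⟩, hmsmh k, hms0 k⟩
      simpa [mem_closedBall_zero_iff] using hB k
    obtain ⟨⟨v, m'⟩, hvm, ψ, hψ, hconv⟩ :=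
      ((hBc.prod isCompact_Icc).tendsto_subseq hmem)
    have hTz : Tendsto (fun l => T (zs (ψ l))) atTop (𝓝 v) := by
      have := (continuous_fst.tendsto ((v, m') : X × ℝ)).comp hconv
      simpa [Function.comp_def] using this
    have hmsψ : Tendsto (fun l => ms (ψ l)) atTop (𝓝 mh) :=
      hmstend.comp hψ.tendsto_atTop
    have hzz : ∀ k, zs k = (ms k)⁻¹ • (T (zs k) + p0) := by
      intro k
      have := congrArg (fun y => (ms k)⁻¹ • y) (hzseq k)
      simp only [smul_smul, inv_mul_cancel₀ (hmspos k).ne', one_smul] at this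
      exact this
    have hzlim : Tendsto (fun l => zs (ψ l)) atTop (𝓝 (mh⁻¹ • (v + p0))) := by
      have h1 : Tendsto (fun l => (ms (ψ l))⁻¹ • (T (zs (ψ l)) + p0)) atTop
          (𝓝 (mh⁻¹ • (v + p0))) :=
        (hmsψ.inv₀ hmhpos.ne').smul (hTz.add tendsto_const_nhds)
      exact Tendsto.congr (fun l => (hzz (ψ l)).symm) h1
    set zstar : X := mh⁻¹ • (v + p0) with hzstardef
    have hzstarP : zstar ∈ P :=
      hPclosed.mem_of_tendsto hzlim (Eventually.of_forall fun l => hzsP _)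
    have hTzstar : T zstar = v :=
      tendsto_nhds_unique ((hTcont.tendsto zstar).comp hzlim) hTz
    have hzstareq : mh • zstar = T zstar + p0 := by
      rw [hTzstar, hzstardef, smul_smul, mul_inv_cancel₀ hmhpos.ne', one_smul]
    have hmhS : mh ∈ S := ⟨hmhpos, zstar, hzstarP, hzstareq⟩
    have hlammh : lam0 < mh := hSlam0 _ hmhS
    -- midpoint
    set μ : ℝ := (lam0 + mh)/2 with hμdef
    have hμpos : 0 < μ := by rw [hμdef]; linarith
    have hμlt : μ < mh := by rw [hμdef]; linarith
    have hμgt : lam0 < μ := by rw [hμdef]; linarith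
    have hzstarne : zstar ≠ 0 := by
      intro h
      rw [h, smul_zero, hT0, zero_add] at hzstareq
      exact hp0ne hzstareq.symm
    -- iteration from zstar at level μ
    set F : X → X := fun y => μ⁻¹ • (T y + p0) with hFdef
    set zz : ℕ → X := fun n => F^[n] zstar with hzzdef
    have hrec : ∀ n, zz (n+1) = μ⁻¹ • (T (zz n) + p0) := by
      intro n
      simp only [hzzdef, Function.iterate_succ_apply']
      rfl
    have hrec' : ∀ n, μ • zz (n+1) = T (zz n) + p0 := by
      intro n
      rw [hrec n, smul_smul, mul_inv_cancel₀ hμpos.ne', one_smul]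
    have hzz0 : zz 0 = zstar := rfl
    have hstart : zz 1 - zz 0 ∈ P := by
      have e : zz 1 - zz 0 = (μ⁻¹ * mh - 1) • zstar := by
        rw [hrec 0, hzz0, ← hzstareq, smul_smul, sub_smul, one_smul]
      rw [e]
      apply hPsmul _ _ _ hzstarP
      rw [sub_nonneg, ← div_eq_inv_mul, le_div_iff₀ hμpos, one_mul]
      exact hμlt.le
    have hTP : ∀ x ∈ P, T x ∈ P := fun x hx => by
      have := hTmono 0 x (by simpa using hx)
      simpa [hT0] using this
    have hzzP : ∀ n, zz n ∈ P := by
      intro n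
      induction n with
      | zero => exact hzstarP
      | succ n ih =>
          rw [hrec]
          exact hPsmul _ (inv_nonneg.mpr hμpos.le) _ (hPadd _ (hTP _ ih) _ hp0P)
    have hinc : ∀ n, zz (n+1) - zz n ∈ P := by
      intro n
      induction n with
      | zero => exact hstart
      | succ n ih =>
          have h1 : T (zz (n+1)) - T (zz n) ∈ P := hTmono _ _ ih
          obtain ⟨a, ha⟩ : ∃ a, T (zz (n+1)) = a := ⟨_, rfl⟩
          have e : zz (n+2) - zz (n+1) = μ⁻¹ • (a - T (zz n)) := by
            rw [hrec (n+1), ha, hrec n]; module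
          rw [← ha] at e
          rw [e]
          exact hPsmul _ (inv_nonneg.mpr hμpos.le) _ h1
    by_cases hB2 : ∃ B2, ∀ n, ‖zz n‖ ≤ B2
    · -- bounded: μ ∈ S, contradicting μ < mh = inf S
      obtain ⟨B2, hB2⟩ := hB2
      obtain ⟨L, hLP, hLeq, -⟩ := kr_iter hPclosed hPadd hPsmul hPpointed h0P hTcont
        hTcompact hTmono hT0 hμpos hp0P zz hzstarP hrec hstart hB2
      have : μ ∈ S := ⟨hμpos, L, hLP, hLeq⟩
      have := csInf_le hSbdd this
      rw [← hmhdef] at this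
      linarith
    · -- unbounded: kr_record produces a subsolution beating lam0
      push_neg at hB2
      have hunb : ∀ b : ℝ, ∃ n, b < ‖zz n‖ := by
        intro b
        obtain ⟨n, hn⟩ := hB2 b
        exact ⟨n, hn⟩
      obtain ⟨q, y, c, hqP, hq1, hqsub, hc0, hcμ, hyKT, hqcy⟩ :=
        kr_record hPclosed hPadd hPsmul hPpointed h0P hTcont hTcompact hTmono hT0 hThom
          hμpos hp0P hp01.le zz hzzP (hzz0 ▸ hzstarne) hinc hrec' hunb hC1 hCbd
      -- q is a candidate in A with first coordinate μ > lam0 : contradiction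
      have hcM : c ≤ M := by
        have h1 : M⁻¹ ≤ μ := le_trans hlam0 hμgt.le
        have h2 : μ⁻¹ ≤ M := by
          rw [inv_le_comm₀ hμpos hM] at *
          exact h1
        exact le_trans hcμ h2
      have hqKc : q ∈ Kc := by
        rw [hKcdef]
        refine Set.mem_insert_iff.mpr (Or.inr ?_)
        exact ⟨(c, y), ⟨⟨hc0, hcM⟩, hyKT⟩, hqcy.symm⟩
      have hqA : (μ, q) ∈ A := by
        refine ⟨⟨hμpos.le, ?_⟩, hqKc, hq1, hqP, hqsub⟩
        have h3 : C ≤ max M⁻¹ C := le_max_right _ _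
        rw [hΛmdef]
        linarith
      have hle : μ ≤ lam0 := hmax hqA
      linarith
  · -- unbounded case: direct eigenvector extraction
    push_neg at hbdd
    have hpick : ∀ j : ℕ, ∃ k, (j:ℝ) < ‖zs k‖ := by
      intro j
      obtain ⟨k, hk⟩ := hbdd (j:ℝ)
      exact ⟨k, hk⟩
    choose ξ hξ using hpick
    have hσpos : ∀ j, (0:ℝ) < ‖zs (ξ j)‖ :=
      fun j => lt_of_le_of_lt (Nat.cast_nonneg j) (hξ j)
    set ys : ℕ → X := fun j => ‖zs (ξ j)‖⁻¹ • zs (ξ j) with hysdef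
    have hys1 : ∀ j, ‖ys j‖ = 1 := by
      intro j
      simp only [hysdef]
      rw [norm_smul, Real.norm_eq_abs, abs_of_pos (inv_pos.mpr (hσpos j))]
      exact inv_mul_cancel₀ (hσpos j).ne'
    have hysP : ∀ j, ys j ∈ P :=
      fun j => hPsmul _ (inv_nonneg.mpr (hσpos j).le) _ (hzsP _)
    have hTys : ∀ j, T (zs (ξ j)) = ‖zs (ξ j)‖ • T (ys j) := by
      intro j
      conv_lhs => rw [show zs (ξ j) = ‖zs (ξ j)‖ • ys j from
        (smul_inv_smul₀ (hσpos j).ne' _).symm]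
      exact hThom _ (norm_nonneg _) _
    have hkey : ∀ j, ys j = (ms (ξ j))⁻¹ • (T (ys j) + ‖zs (ξ j)‖⁻¹ • p0) := by
      intro j
      have h1 : ms (ξ j) • ys j = T (ys j) + ‖zs (ξ j)‖⁻¹ • p0 := by
        calc ms (ξ j) • ys j = ‖zs (ξ j)‖⁻¹ • (ms (ξ j) • zs (ξ j)) := by
              rw [hysdef]; exact smul_comm _ _ _
          _ = ‖zs (ξ j)‖⁻¹ • (T (zs (ξ j)) + p0) := by rw [hzseq]
          _ = ‖zs (ξ j)‖⁻¹ • (‖zs (ξ j)‖ • T (ys j) + p0) := by rw [hTys]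
          _ = T (ys j) + ‖zs (ξ j)‖⁻¹ • p0 := by
              rw [smul_add, inv_smul_smul₀ (hσpos j).ne']
      rw [← h1, inv_smul_smul₀ (hmspos _).ne']
    have hms0 : ∀ k, ms k ≤ ms 0 := fun k => hanti (Nat.zero_le k)
    have hmem : ∀ j, ((T (ys j), ms (ξ j)) : X × ℝ) ∈ KT ×ˢ Set.Icc mh (ms 0) := by
      intro j
      refine ⟨subset_closure ⟨ys j, ?_, rfl⟩, hmsmh _, hms0 _⟩
      simp [mem_closedBall_zero_iff, (hys1 j).le]
    obtain ⟨⟨v, m'⟩, hvm, ψ, hψ, hconv⟩ := ((hKT.prod isCompact_Icc).tendsto_subseq hmem)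
    have hm' : mh ≤ m' := hvm.2.1
    have hm'pos : 0 < m' := lt_of_lt_of_le hmhpos hm'
    have hTylim : Tendsto (fun l => T (ys (ψ l))) atTop (𝓝 v) := by
      have := (continuous_fst.tendsto ((v, m') : X × ℝ)).comp hconv
      simpa [Function.comp_def] using this
    have hmslim : Tendsto (fun l => ms (ξ (ψ l))) atTop (𝓝 m') := by
      have := (continuous_snd.tendsto ((v, m') : X × ℝ)).comp hconv
      simpa [Function.comp_def] using this
    have hσtop : Tendsto (fun l => ‖zs (ξ (ψ l))‖) atTop atTop := by
      apply tendsto_atTop_mono (f := fun l : ℕ => (l:ℝ))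
      · intro l
        exact le_trans (Nat.cast_le.mpr hψ.le_apply) (hξ (ψ l)).le
      · exact tendsto_natCast_atTop_atTop
    have hσinv : Tendsto (fun l => ‖zs (ξ (ψ l))‖⁻¹) atTop (𝓝 0) :=
      tendsto_inv_atTop_zero.comp hσtop
    set ystar : X := m'⁻¹ • v with hystardef
    have hyslim : Tendsto (fun l => ys (ψ l)) atTop (𝓝 ystar) := by
      have h1 : Tendsto (fun l => (ms (ξ (ψ l)))⁻¹ •
          (T (ys (ψ l)) + ‖zs (ξ (ψ l))‖⁻¹ • p0)) atTop (𝓝 (m'⁻¹ • (v + (0:ℝ) • p0))) :=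
        (hmslim.inv₀ hm'pos.ne').smul (hTylim.add (hσinv.smul_const p0))
      rw [zero_smul, add_zero] at h1
      exact Tendsto.congr (fun l => (hkey (ψ l)).symm) h1
    have hystar1 : ‖ystar‖ = 1 := by
      have h1 : Tendsto (fun l => ‖ys (ψ l)‖) atTop (𝓝 ‖ystar‖) := hyslim.norm
      have h2 : Tendsto (fun l => ‖ys (ψ l)‖) atTop (𝓝 1) := by
        simp only [hys1]; exact tendsto_const_nhds
      exact tendsto_nhds_unique h1 h2
    have hystarP : ystar ∈ P :=
      hPclosed.mem_of_tendsto hyslim (Eventually.of_forall fun l => hysP _)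
    have hTystar : T ystar = v :=
      tendsto_nhds_unique ((hTcont.tendsto ystar).comp hyslim) hTylim
    refine ⟨m', ystar, hm'pos, hystarP, ?_, ?_⟩
    · intro h
      rw [h] at hystar1
      simp at hystar1
    · rw [hTystar, hystardef, smul_smul, mul_inv_cancel₀ hm'pos.ne', one_smul]
end

section
/- Let d ≥ 1 be an integer and let θ > 0, A > 0, κ > 0, R₀ > 0 and α ∈ (1,2]. Let a : ℝ^d → ℝ^{d×d} be a matrix-valued function with operator norm ‖a(x)‖ ≤ A for all x ∈ ℝ^d, and let v : ℝ^d → ℝ^d satisfy ⟨v(x),x⟩ ≤ −κ|x|^α for all x with |x| ≥ R₀. Define V : ℝ^d → ℝ by V(x) = exp(θ·√(|x|²+1)). Then V is twice continuously differentiable, and there exists R ≥ R₀ such that for every x with |x| ≥ R, trace(a(x)·∇²V(x)) + ⟨v(x), ∇V(x)⟩ ≤ −(θκ/2)·|x|^{α−1}·V(x). -/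
open scoped BigOperators

/-- `trace (A ∇²f(x))` where the Hessian is expressed via the second iterated
Fréchet derivative evaluated at coordinate directions. -/
noncomputable def traceHess {d : ℕ} (A : Matrix (Fin d) (Fin d) ℝ)
    (f : EuclideanSpace ℝ (Fin d) → ℝ) (x : EuclideanSpace ℝ (Fin d)) : ℝ :=
  ∑ i, ∑ j, A i j *
    iteratedFDeriv ℝ 2 f x ![EuclideanSpace.single i 1, EuclideanSpace.single j 1]

noncomputable def lyapV (d : ℕ) (θ : ℝ) (x : EuclideanSpace ℝ (Fin d)) : ℝ :=
  Real.exp (θ * Real.sqrt (‖x‖ ^ 2 + 1))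

section Aux

variable {E : Type*} [NormedAddCommGroup E] [InnerProductSpace ℝ E]

lemma hasFDerivAt_phi' (x : E) :
    HasFDerivAt (fun y : E => Real.sqrt (‖y‖ ^ 2 + 1))
      ((Real.sqrt (‖x‖ ^ 2 + 1))⁻¹ • innerSL ℝ x) x := by
  have h1 : HasFDerivAt (fun y : E => ‖y‖ ^ 2 + 1) ((2 : ℕ) • innerSL ℝ x) x :=
    ((hasStrictFDerivAt_norm_sq x).hasFDerivAt).add_const (1 : ℝ)
  have h2 := (Real.hasDerivAt_sqrt (by positivity : (‖x‖ ^ 2 + 1 : ℝ) ≠ 0)).comp_hasFDerivAt x h1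
  have hφ : Real.sqrt (‖x‖ ^ 2 + 1) ≠ 0 := by positivity
  refine h2.congr_fderiv (Eq.symm ?_)
  ext y
  simp [smul_smul]
  field_simp

lemma hasFDerivAt_expPhi (θ : ℝ) (x : E) :
    HasFDerivAt (fun y : E => Real.exp (θ * Real.sqrt (‖y‖ ^ 2 + 1)))
      ((θ * Real.exp (θ * Real.sqrt (‖x‖ ^ 2 + 1)) / Real.sqrt (‖x‖ ^ 2 + 1)) • innerSL ℝ x)
      x := by
  have h1 := (hasFDerivAt_phi' x).const_mul θ
  have h2 := (Real.hasDerivAt_exp (θ * Real.sqrt (‖x‖ ^ 2 + 1))).comp_hasFDerivAt x h1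
  have hφ : Real.sqrt (‖x‖ ^ 2 + 1) ≠ 0 := by positivity
  refine h2.congr_fderiv (Eq.symm ?_)
  ext y
  simp [smul_smul]
  exact Or.inl (by rw [div_eq_mul_inv]; ring)

lemma hasFDerivAt_cV (θ : ℝ) (x : E) :
    HasFDerivAt (fun y : E => θ * Real.exp (θ * Real.sqrt (‖y‖ ^ 2 + 1)) / Real.sqrt (‖y‖ ^ 2 + 1))
      ((θ * Real.exp (θ * Real.sqrt (‖x‖ ^ 2 + 1)) *
        (θ / Real.sqrt (‖x‖ ^ 2 + 1) ^ 2 - 1 / Real.sqrt (‖x‖ ^ 2 + 1) ^ 3)) • innerSL ℝ x) x := by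
  set φ := Real.sqrt (‖x‖ ^ 2 + 1) with hφdef
  have hφ0 : (0:ℝ) < φ := Real.sqrt_pos.2 (by positivity)
  have hφ : φ ≠ 0 := ne_of_gt hφ0
  have hmul : HasDerivAt (fun t : ℝ => θ * t) θ φ := by
    simpa using (hasDerivAt_id φ).const_mul θ
  have hexp : HasDerivAt (fun t : ℝ => Real.exp (θ * t)) (Real.exp (θ * φ) * θ) φ :=
    (Real.hasDerivAt_exp (θ * φ)).comp φ hmul
  have hinv : HasDerivAt (fun t : ℝ => t⁻¹) (-(φ ^ 2)⁻¹) φ := hasDerivAt_inv hφ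
  have hg : HasDerivAt (fun t : ℝ => θ * (Real.exp (θ * t) * t⁻¹))
      (θ * (Real.exp (θ * φ) * θ * φ⁻¹ + Real.exp (θ * φ) * -(φ ^ 2)⁻¹)) φ :=
    (hexp.mul hinv).const_mul θ
  have h2 := hg.comp_hasFDerivAt x (hasFDerivAt_phi' x)
  have hfun : (fun y : E => θ * Real.exp (θ * Real.sqrt (‖y‖ ^ 2 + 1)) / Real.sqrt (‖y‖ ^ 2 + 1))
      = (fun t : ℝ => θ * (Real.exp (θ * t) * t⁻¹)) ∘ (fun y : E => Real.sqrt (‖y‖ ^ 2 + 1)) := by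
    funext y; simp [Function.comp, div_eq_mul_inv, mul_assoc]
  rw [hfun]
  refine h2.congr_fderiv (Eq.symm ?_)
  rw [smul_smul]
  congr 1
  field_simp
  ring

open scoped RealInnerProductSpace in
lemma fderiv_fderiv_expPhi (θ : ℝ) (x u w : E) :
    fderiv ℝ (fderiv ℝ (fun y : E => Real.exp (θ * Real.sqrt (‖y‖ ^ 2 + 1)))) x u w
      = (θ * Real.exp (θ * Real.sqrt (‖x‖ ^ 2 + 1)) / Real.sqrt (‖x‖ ^ 2 + 1)) * ⟪u, w⟫
        + (θ * Real.exp (θ * Real.sqrt (‖x‖ ^ 2 + 1)) *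
            (θ / Real.sqrt (‖x‖ ^ 2 + 1) ^ 2 - 1 / Real.sqrt (‖x‖ ^ 2 + 1) ^ 3))
          * ⟪x, u⟫ * ⟪x, w⟫ := by
  have hF : fderiv ℝ (fun y : E => Real.exp (θ * Real.sqrt (‖y‖ ^ 2 + 1)))
      = fun y : E => (θ * Real.exp (θ * Real.sqrt (‖y‖ ^ 2 + 1)) / Real.sqrt (‖y‖ ^ 2 + 1))
          • innerSL ℝ y :=
    funext fun y => (hasFDerivAt_expPhi θ y).fderiv
  have hin : HasFDerivAt (fun y : E => innerSL ℝ y)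
      (innerSL ℝ : E →L[ℝ] E →L[ℝ] ℝ) x := (innerSL ℝ : E →L[ℝ] E →L[ℝ] ℝ).hasFDerivAt
  have hD : HasFDerivAt (fun y : E => (θ * Real.exp (θ * Real.sqrt (‖y‖ ^ 2 + 1)) / Real.sqrt (‖y‖ ^ 2 + 1))
      • innerSL ℝ y) _ x := (hasFDerivAt_cV θ x).smul hin
  rw [hF, hD.fderiv]
  simp only [ContinuousLinearMap.add_apply, ContinuousLinearMap.smul_apply,
    ContinuousLinearMap.smulRight_apply, innerSL_apply_apply, smul_eq_mul]
  rfl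

end Aux

lemma toEuclideanCLM_apply_coord {d : ℕ} (A : Matrix (Fin d) (Fin d) ℝ)
    (x : EuclideanSpace ℝ (Fin d)) (i : Fin d) :
    Matrix.toEuclideanCLM (𝕜 := ℝ) A x i = ∑ j, A i j * x j := rfl

open scoped RealInnerProductSpace in
lemma euclidean_inner_eq {d : ℕ} (x y : EuclideanSpace ℝ (Fin d)) :
    ⟪x, y⟫ = ∑ i, x i * y i := by
  simp [PiLp.inner_apply, RCLike.inner_apply, conj_trivial, mul_comm]

lemma sum_expand {d : ℕ} (A : Matrix (Fin d) (Fin d) ℝ) (c k : ℝ) (x : Fin d → ℝ) :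
    (∑ i, ∑ j, A i j * (c * (if i = j then 1 else 0) + k * x i * x j))
      = c * (∑ i, A i i) + k * (∑ i, ∑ j, A i j * x i * x j) := by
  simp only [mul_add, Finset.sum_add_distrib]
  congr 1
  · rw [Finset.mul_sum]
    refine Finset.sum_congr rfl fun i _ => ?_
    simp [mul_ite, Finset.sum_ite_eq, mul_comm]
  · rw [Finset.mul_sum]
    refine Finset.sum_congr rfl fun i _ => ?_
    rw [Finset.mul_sum]
    refine Finset.sum_congr rfl fun j _ => ?_
    ring

set_option maxHeartbeats 1000000 in
open scoped RealInnerProductSpace in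
theorem stmt7 (d : ℕ) (hd : 1 ≤ d) (θ A κ R₀ α : ℝ)
    (hθ : 0 < θ) (hA : 0 < A) (hκ : 0 < κ) (hR₀ : 0 < R₀)
    (hα₁ : 1 < α) (hα₂ : α ≤ 2)
    (a : EuclideanSpace ℝ (Fin d) → Matrix (Fin d) (Fin d) ℝ)
    (ha : ∀ x, ‖Matrix.toEuclideanCLM (𝕜 := ℝ) (a x)‖ ≤ A)
    (v : EuclideanSpace ℝ (Fin d) → EuclideanSpace ℝ (Fin d))
    (hv : ∀ x : EuclideanSpace ℝ (Fin d), R₀ ≤ ‖x‖ →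
      ∑ i, v x i * x i ≤ -κ * ‖x‖ ^ α) :
    ContDiff ℝ 2 (lyapV d θ) ∧
    ∃ R : ℝ, R₀ ≤ R ∧ ∀ x : EuclideanSpace ℝ (Fin d), R ≤ ‖x‖ →
      traceHess (a x) (lyapV d θ) x + fderiv ℝ (lyapV d θ) x (v x)
        ≤ -(θ * κ / 2) * ‖x‖ ^ (α - 1) * lyapV d θ x := by
  constructor
  · -- smoothness
    have h1 : ContDiff ℝ 2 (fun x : EuclideanSpace ℝ (Fin d) => ‖x‖ ^ 2 + 1) :=
      (contDiff_norm_sq ℝ).add contDiff_const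
    have h2 : ContDiff ℝ 2 (fun x : EuclideanSpace ℝ (Fin d) => Real.sqrt (‖x‖ ^ 2 + 1)) := by
      rw [contDiff_iff_contDiffAt]
      intro x
      exact (Real.contDiffAt_sqrt (by positivity)).comp x h1.contDiffAt
    exact Real.contDiff_exp.comp (contDiff_const.mul h2)
  · have hdA : (0:ℝ) ≤ (d:ℝ) := Nat.cast_nonneg d
    have hC : (0:ℝ) < A * ((d:ℝ) + θ + 1) := mul_pos hA (by linarith)
    set C := A * ((d:ℝ) + θ + 1) with hCdef
    clear_value C
    refine ⟨max R₀ (max 1 ((6 * C / κ + 1) ^ (α - 1)⁻¹)), le_max_left _ _, ?_⟩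
    intro x hx
    have hn1 : (1:ℝ) ≤ ‖x‖ :=
      le_trans (le_trans (le_max_left 1 _) (le_max_right R₀ _)) hx
    have hn0 : (0:ℝ) < ‖x‖ := lt_of_lt_of_le one_pos hn1
    have hR₀n : R₀ ≤ ‖x‖ := le_trans (le_max_left R₀ _) hx
    have hB1 : ((6 * C / κ + 1) ^ (α - 1)⁻¹ : ℝ) ≤ ‖x‖ :=
      le_trans (le_trans (le_max_right 1 _) (le_max_right R₀ _)) hx
    set n := ‖x‖ with hndef
    clear_value n
    set φ := Real.sqrt (n ^ 2 + 1) with hφdef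
    have hφsq : φ ^ 2 = n ^ 2 + 1 := Real.sq_sqrt (by positivity)
    have hφ0 : (0:ℝ) < φ := Real.sqrt_pos.2 (by positivity)
    have hφ1 : (1:ℝ) ≤ φ := by
      have h := Real.sqrt_le_sqrt (show (1:ℝ) ≤ n ^ 2 + 1 by have := sq_nonneg n; linarith)
      rwa [Real.sqrt_one] at h
    have hnφ : n ≤ φ := by
      have h := Real.sqrt_le_sqrt (show n ^ 2 ≤ n ^ 2 + 1 by linarith)
      rwa [Real.sqrt_sq hn0.le] at h
    have hφle : φ ≤ 1.5 * n := by
      have hn2 : (1:ℝ) ≤ n ^ 2 := by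
        have := mul_le_mul hn1 hn1 zero_le_one (le_trans zero_le_one hn1)
        simpa [pow_two] using this
      have h := Real.sqrt_le_sqrt (show n ^ 2 + 1 ≤ (1.5 * n) ^ 2 by
        calc n ^ 2 + 1 ≤ 2 * n ^ 2 := by linarith
          _ ≤ 2.25 * n ^ 2 := by linarith [sq_nonneg n]
          _ = (1.5 * n) ^ 2 := by rw [mul_pow]; norm_num)
      rwa [Real.sqrt_sq (by positivity)] at h
    clear_value φ
    set Eg := Real.exp (θ * φ) with hEgdef
    have hEg0 : (0:ℝ) < Eg := Real.exp_pos _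
    clear_value Eg
    set c := θ * Eg / φ with hcdef
    set k := θ * Eg * (θ / φ ^ 2 - 1 / φ ^ 3) with hkdef
    have hc0 : (0:ℝ) < c := by rw [hcdef]; exact div_pos (mul_pos hθ hEg0) hφ0
    clear_value c k
    have hMA : ‖Matrix.toEuclideanCLM (𝕜 := ℝ) (a x)‖ ≤ A := ha x
    set M := Matrix.toEuclideanCLM (𝕜 := ℝ) (a x) with hMdef
    set p := n ^ (α - 1) with hpdef
    have hp0 : (0:ℝ) < p := Real.rpow_pos_of_pos hn0 _
    have hpB : 6 * C / κ ≤ p := by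
      have hb : (0:ℝ) < 6 * C / κ + 1 := by
        have := div_pos (by linarith : (0:ℝ) < 6 * C) hκ
        linarith
      have h2 : (((6 * C / κ + 1) ^ (α - 1)⁻¹) : ℝ) ^ (α - 1) ≤ p := by
        rw [hpdef]
        exact Real.rpow_le_rpow (Real.rpow_nonneg hb.le _) hB1 (by linarith)
      rw [← Real.rpow_mul hb.le, inv_mul_cancel₀ (by linarith : α - 1 ≠ 0),
        Real.rpow_one] at h2
      linarith
    have hpn : p * n = n ^ α := by
      rw [hpdef]
      calc n ^ (α - 1) * n = n ^ (α - 1) * n ^ (1:ℝ) := by rw [Real.rpow_one]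
        _ = n ^ (α - 1 + 1) := (Real.rpow_add hn0 _ _).symm
        _ = n ^ α := by ring_nf
    clear_value p
    -- second derivatives
    have hsecond : ∀ i j : Fin d,
        iteratedFDeriv ℝ 2 (lyapV d θ) x
          ![EuclideanSpace.single i 1, EuclideanSpace.single j 1]
          = c * (if i = j then 1 else 0) + k * x i * x j := by
      intro i j
      rw [show lyapV d θ = fun y : EuclideanSpace ℝ (Fin d) =>
          Real.exp (θ * Real.sqrt (‖y‖ ^ 2 + 1)) from rfl, iteratedFDeriv_two_apply]
      simp only [Matrix.cons_val_zero, Matrix.cons_val_one, Matrix.head_cons]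
      rw [fderiv_fderiv_expPhi]
      rw [EuclideanSpace.inner_single_left, EuclideanSpace.inner_single_right,
        EuclideanSpace.inner_single_right]
      simp only [map_one, one_mul, conj_trivial, EuclideanSpace.single_apply]
      rw [hcdef, hkdef, hEgdef, hφdef, hndef]
    -- trace expansion
    have htr : traceHess (a x) (lyapV d θ) x
        = c * (∑ i, a x i i) + k * (∑ i, ∑ j, a x i j * x i * x j) := by
      rw [traceHess]
      rw [show (∑ i, ∑ j, a x i j *
          iteratedFDeriv ℝ 2 (lyapV d θ) x
            ![EuclideanSpace.single i 1, EuclideanSpace.single j 1])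
          = ∑ i, ∑ j, a x i j * (c * (if i = j then 1 else 0) + k * x i * x j) from
        Finset.sum_congr rfl fun i _ => Finset.sum_congr rfl fun j _ => by rw [hsecond]]
      exact sum_expand _ _ _ _
    -- bounds on trace and quadratic form
    have hsingle_norm : ∀ i : Fin d,
        ‖(EuclideanSpace.single i (1:ℝ) : EuclideanSpace ℝ (Fin d))‖ = 1 := by
      intro i
      rw [EuclideanSpace.norm_single, norm_one]
    have hTb : |∑ i, a x i i| ≤ (d:ℝ) * A := by
      calc |∑ i, a x i i| ≤ ∑ i, |a x i i| := Finset.abs_sum_le_sum_abs _ _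
        _ ≤ ∑ _i : Fin d, A := by
            refine Finset.sum_le_sum fun i _ => ?_
            have h1 : a x i i = ⟪(EuclideanSpace.single i 1 : EuclideanSpace ℝ (Fin d)),
                M (EuclideanSpace.single i 1)⟫ := by
              rw [EuclideanSpace.inner_single_left, hMdef, toEuclideanCLM_apply_coord]
              simp [EuclideanSpace.single_apply]
            rw [h1]
            calc |⟪(EuclideanSpace.single i 1 : EuclideanSpace ℝ (Fin d)),
                M (EuclideanSpace.single i 1)⟫|
                ≤ ‖(EuclideanSpace.single i 1 : EuclideanSpace ℝ (Fin d))‖ *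
                  ‖M (EuclideanSpace.single i 1)‖ := abs_real_inner_le_norm _ _
              _ ≤ 1 * (‖M‖ * ‖(EuclideanSpace.single i 1 : EuclideanSpace ℝ (Fin d))‖) := by
                  refine mul_le_mul (le_of_eq (hsingle_norm i)) (M.le_opNorm _)
                    (norm_nonneg _) (by norm_num)
              _ ≤ A := by
                  rw [hsingle_norm i, mul_one, one_mul]
                  exact hMA
        _ = (d:ℝ) * A := by
            rw [Finset.sum_const, Finset.card_univ, Fintype.card_fin, nsmul_eq_mul]
    have hSb : |∑ i, ∑ j, a x i j * x i * x j| ≤ A * n ^ 2 := by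
      have hSinner : (∑ i, ∑ j, a x i j * x i * x j) = ⟪x, M x⟫ := by
        rw [euclidean_inner_eq]
        refine Finset.sum_congr rfl fun i _ => ?_
        rw [hMdef, toEuclideanCLM_apply_coord, Finset.mul_sum]
        exact Finset.sum_congr rfl fun j _ => by ring
      rw [hSinner]
      calc |⟪x, M x⟫| ≤ ‖x‖ * ‖M x‖ := abs_real_inner_le_norm _ _
        _ ≤ ‖x‖ * (‖M‖ * ‖x‖) :=
            mul_le_mul_of_nonneg_left (M.le_opNorm _) (norm_nonneg _)
        _ = ‖M‖ * ‖x‖ ^ 2 := by ring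
        _ ≤ A * ‖x‖ ^ 2 := mul_le_mul_of_nonneg_right hMA (sq_nonneg _)
        _ = A * n ^ 2 := by rw [hndef]
    -- first derivative term
    have hIP : fderiv ℝ (lyapV d θ) x (v x) = c * ⟪x, v x⟫ := by
      rw [show lyapV d θ = fun y : EuclideanSpace ℝ (Fin d) =>
          Real.exp (θ * Real.sqrt (‖y‖ ^ 2 + 1)) from rfl,
        (hasFDerivAt_expPhi θ x).fderiv]
      simp only [ContinuousLinearMap.smul_apply, innerSL_apply_apply, smul_eq_mul]
      rw [hcdef, hEgdef, hφdef, hndef]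
    have hIPle : ⟪x, v x⟫ ≤ -κ * (p * n) := by
      rw [hpn, euclidean_inner_eq, hndef]
      calc (∑ i, x i * v x i) = ∑ i, v x i * x i :=
            Finset.sum_congr rfl fun i _ => mul_comm _ _
        _ ≤ -κ * ‖x‖ ^ α := hv x (by rw [← hndef]; exact hR₀n)
    -- final combination
    have hVx : lyapV d θ x = Eg := by
      rw [hEgdef, hφdef, hndef]; rfl
    rw [htr, hIP, hVx]
    set T := ∑ i, a x i i with hTdef
    set S := ∑ i, ∑ j, a x i j * x i * x j with hSdef
    clear_value T S
    have hθEg : (0:ℝ) < θ * Eg := mul_pos hθ hEg0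
    have hcle : c ≤ θ * Eg := by
      rw [hcdef]
      exact div_le_self hθEg.le hφ1
    have hb1 : c * T ≤ θ * Eg * ((d:ℝ) * A) :=
      calc c * T ≤ c * ((d:ℝ) * A) :=
            mul_le_mul_of_nonneg_left (le_trans (le_abs_self T) hTb) hc0.le
        _ ≤ θ * Eg * ((d:ℝ) * A) :=
            mul_le_mul_of_nonneg_right hcle (mul_nonneg hdA hA.le)
    have hφ2 : (0:ℝ) < φ ^ 2 := pow_pos hφ0 2
    have hkabs : |k| ≤ θ * Eg * (θ + 1) / φ ^ 2 := by
      rw [hkdef, abs_mul, abs_of_pos hθEg]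
      have h1 : |θ / φ ^ 2 - 1 / φ ^ 3| ≤ θ / φ ^ 2 + 1 / φ ^ 3 := by
        refine le_trans (abs_sub _ _) ?_
        rw [abs_of_nonneg (div_nonneg hθ.le hφ2.le),
          abs_of_nonneg (div_nonneg one_pos.le (pow_pos hφ0 3).le)]
      have h2 : 1 / φ ^ 3 ≤ 1 / φ ^ 2 := by
        apply one_div_le_one_div_of_le hφ2
        calc φ ^ 2 = φ ^ 2 * 1 := by ring
          _ ≤ φ ^ 2 * φ := mul_le_mul_of_nonneg_left hφ1 hφ2.le
          _ = φ ^ 3 := by ring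
      calc θ * Eg * |θ / φ ^ 2 - 1 / φ ^ 3| ≤ θ * Eg * (θ / φ ^ 2 + 1 / φ ^ 3) :=
            mul_le_mul_of_nonneg_left h1 hθEg.le
        _ ≤ θ * Eg * (θ / φ ^ 2 + 1 / φ ^ 2) :=
            mul_le_mul_of_nonneg_left (by linarith) hθEg.le
        _ = θ * Eg * (θ + 1) / φ ^ 2 := by ring
    have hb2 : k * S ≤ θ * Eg * ((θ + 1) * A) := by
      have hbnd0 : (0:ℝ) ≤ θ * Eg * (θ + 1) / φ ^ 2 :=
        div_nonneg (mul_nonneg hθEg.le (by linarith)) hφ2.le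
      have h1 : k * S ≤ |k| * |S| := by
        calc k * S ≤ |k * S| := le_abs_self _
          _ = |k| * |S| := abs_mul _ _
      have h2 : |k| * |S| ≤ (θ * Eg * (θ + 1) / φ ^ 2) * (A * n ^ 2) :=
        mul_le_mul hkabs hSb (abs_nonneg _) hbnd0
      have h3 : (θ * Eg * (θ + 1) / φ ^ 2) * (A * n ^ 2) ≤ θ * Eg * ((θ + 1) * A) := by
        rw [div_mul_eq_mul_div, div_le_iff₀ hφ2]
        have hn2 : n ^ 2 ≤ φ ^ 2 := by rw [hφsq]; linarith
        have h0 : (0:ℝ) ≤ θ * Eg * (θ + 1) * A :=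
          mul_nonneg (mul_nonneg hθEg.le (by linarith)) hA.le
        calc θ * Eg * (θ + 1) * (A * n ^ 2) = (θ * Eg * (θ + 1) * A) * n ^ 2 := by ring
          _ ≤ (θ * Eg * (θ + 1) * A) * φ ^ 2 := mul_le_mul_of_nonneg_left hn2 h0
          _ = θ * Eg * ((θ + 1) * A) * φ ^ 2 := by ring
      linarith
    have hb3 : c * ⟪x, v x⟫ ≤ -(θ * Eg * (κ * p * (2/3 : ℝ))) := by
      have h1 : c * ⟪x, v x⟫ ≤ c * (-κ * (p * n)) :=
        mul_le_mul_of_nonneg_left hIPle hc0.le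
      have hfact : (0:ℝ) ≤ θ * Eg * (κ * p * (2/3 : ℝ)) :=
        mul_nonneg hθEg.le (mul_nonneg (mul_nonneg hκ.le hp0.le) (by norm_num))
      have key : θ * Eg * (κ * p * (2/3 : ℝ)) ≤ θ * Eg / φ * (κ * (p * n)) := by
        rw [div_mul_eq_mul_div, le_div_iff₀ hφ0]
        calc θ * Eg * (κ * p * (2/3 : ℝ)) * φ
            ≤ θ * Eg * (κ * p * (2/3 : ℝ)) * (1.5 * n) :=
              mul_le_mul_of_nonneg_left hφle hfact
          _ = θ * Eg * (κ * (p * n)) := by ring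
      have h2 : c * (-κ * (p * n)) ≤ -(θ * Eg * (κ * p * (2/3 : ℝ))) := by
        rw [hcdef]
        have hexpand : θ * Eg / φ * (-κ * (p * n)) = -(θ * Eg / φ * (κ * (p * n))) := by ring
        rw [hexpand]
        linarith [key]
      linarith
    have hCp : C ≤ κ * p / 6 := by
      rw [div_le_iff₀ hκ] at hpB
      linarith
    have h4 : θ * Eg * C ≤ θ * Eg * (κ * p / 6) :=
      mul_le_mul_of_nonneg_left hCp hθEg.le
    have h5 : θ * Eg * ((d:ℝ) * A) + θ * Eg * ((θ + 1) * A) = θ * Eg * C := by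
      rw [hCdef]; ring
    have h6 : θ * Eg * (κ * p / 6) - θ * Eg * (κ * p * (2/3 : ℝ))
        = -(θ * κ / 2) * p * Eg := by ring
    linarith [hb1, hb2, hb3, h4, h5, h6]
end
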